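/- Let A, B be maximal monotone operators on a real Hilbert space H, z ∈ H, β ∈ (0,1), r > 0, and T := (2J_{r(B_z)^{(β)}} − I) ∘ (2J_{r(A_z)^{(β)}} − I). Then the solution set S = {u : z ∈ (I+A+B)(u)} satisfies S = { (1/β)·J_{r(A_z)^{(β)}}(u) + z : u ∈ Fix(T) }. -/
import Mathlib


open scoped RealInnerProductSpace

variable {H : Type*} [NormedAddCommGroup H] [InnerProductSpace ℝ H] [CompleteSpace H]

/-- A set-valued operator is monotone. -/
def MonotoneOp (A : H → Set H) : Prop :=
  ∀ ⦃x y x' y' : H⦄, x' ∈ A x → y' ∈ A y → 0 ≤ ⟪x - y, x' - y'⟫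

/-- A set-valued operator is σ-strongly monotone. -/
def StronglyMonotoneOp (σ : ℝ) (A : H → Set H) : Prop :=
  ∀ ⦃x y x' y' : H⦄, x' ∈ A x → y' ∈ A y → σ * ‖x - y‖ ^ 2 ≤ ⟪x - y, x' - y'⟫

/-- A set-valued operator is maximal monotone. -/
def MaximalMonotoneOp (A : H → Set H) : Prop :=
  MonotoneOp A ∧ ∀ x x' : H, (∀ y y' : H, y' ∈ A y → 0 ≤ ⟪x - y, x' - y'⟫) → x' ∈ A x

/-- The operator `(A_z)^{(β)} : x ↦ 2(1-β)·A((1/β)x + z) + ((1-β)/β)x`. -/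
def pert (A : H → Set H) (z : H) (β : ℝ) : H → Set H :=
  fun x => (fun u => (2 * (1 - β)) • u + ((1 - β) / β) • x) '' A (β⁻¹ • x + z)

lemma res_unique {M : H → Set H} (hM : MonotoneOp M) {r : ℝ} (hr : 0 < r)
    {u v m m' : H} (hm : m ∈ M u) (hm' : m' ∈ M v) (heq : u + r • m = v + r • m') :
    u = v := by
  have h1 : r • (m - m') = v - u := by
    rw [smul_sub, sub_eq_sub_iff_add_eq_add, add_comm (r • m) u]
    exact heq
  have h2 : m - m' = r⁻¹ • (v - u) := by
    rw [← h1, inv_smul_smul₀ hr.ne']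
  have h3 := hM hm hm'
  rw [h2, real_inner_smul_right, show v - u = -(u - v) by abel, inner_neg_right,
    real_inner_self_eq_norm_sq] at h3
  have h4 : ‖u - v‖ ^ 2 ≤ 0 := by nlinarith [inv_pos.mpr hr]
  have h5 : ‖u - v‖ = 0 := by nlinarith [norm_nonneg (u - v)]
  exact sub_eq_zero.mp (norm_eq_zero.mp h5)

lemma mono_pert {A : H → Set H} (hA : MonotoneOp A) (z : H) {β : ℝ}
    (h0 : 0 < β) (h1 : β < 1) : MonotoneOp (pert A z β) := by
  rintro x y x' y' ⟨a, ha, rfl⟩ ⟨b, hb, rfl⟩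
  have key : (0:ℝ) ≤ ⟪(β⁻¹ • x + z) - (β⁻¹ • y + z), a - b⟫ := hA ha hb
  have hxy : (β⁻¹ • x + z) - (β⁻¹ • y + z) = β⁻¹ • (x - y) := by
    rw [smul_sub]; abel
  rw [hxy, real_inner_smul_left] at key
  have hab : 0 ≤ ⟪x - y, a - b⟫ := by
    by_contra hcon
    push_neg at hcon
    nlinarith [mul_pos (inv_pos.mpr h0) (neg_pos.mpr hcon)]
  have expand : (2 * (1 - β)) • a + ((1 - β) / β) • x -
      ((2 * (1 - β)) • b + ((1 - β) / β) • y)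
      = (2 * (1 - β)) • (a - b) + ((1 - β) / β) • (x - y) := by
    rw [smul_sub, smul_sub]; abel
  rw [expand, inner_add_right, real_inner_smul_right, real_inner_smul_right,
    real_inner_self_eq_norm_sq]
  have hd : (0:ℝ) ≤ (1 - β) / β := div_nonneg (by linarith) h0.le
  nlinarith [mul_nonneg hd (sq_nonneg ‖x - y‖),
    mul_nonneg (by linarith : (0:ℝ) ≤ 2 * (1 - β)) hab]

theorem stmt6 (A B : H → Set H) (hA : MaximalMonotoneOp A) (hB : MaximalMonotoneOp B)
    (z : H) (β r : ℝ) (hβ : β ∈ Set.Ioo (0:ℝ) 1) (hr : 0 < r) (JA JB : H → H)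
    (hJA : ∀ w : H, ∃ m ∈ pert A z β (JA w), w = JA w + r • m)
    (hJB : ∀ w : H, ∃ m ∈ pert B z β (JB w), w = JB w + r • m) :
    {u : H | ∃ a ∈ A u, ∃ b ∈ B u, z = u + a + b} =
      (fun u => β⁻¹ • JA u + z) ''
        {x : H | (2:ℝ) • JB ((2:ℝ) • JA x - x) - ((2:ℝ) • JA x - x) = x} := by
  obtain ⟨hβ0, hβ1⟩ := hβ
  have hβne : β ≠ 0 := hβ0.ne'
  have hcne : (2 * (1 - β)) ≠ 0 := by nlinarith
  have hmA := mono_pert hA.1 z hβ0 hβ1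
  have hmB := mono_pert hB.1 z hβ0 hβ1
  ext w
  simp only [Set.mem_setOf_eq, Set.mem_image]
  constructor
  · rintro ⟨a, ha, b, hb, hz⟩
    set u := β • (w - z) with hu_def
    have huw : β⁻¹ • u + z = w := by
      rw [hu_def, inv_smul_smul₀ hβne]; abel
    have hab : a + b = z - w := by rw [hz]; abel
    set p := (2 * (1 - β)) • a + ((1 - β) / β) • u with hp_def
    set q := (2 * (1 - β)) • b + ((1 - β) / β) • u with hq_def
    have hp : p ∈ pert A z β u := ⟨a, by rw [huw]; exact ha, rfl⟩
    have hq : q ∈ pert B z β u := ⟨b, by rw [huw]; exact hb, rfl⟩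
    have hβu : β⁻¹ • u = w - z := by rw [hu_def, inv_smul_smul₀ hβne]
    have hpq : q = -p := by
      have hsum : p + q = (2 * (1 - β)) • (a + b + β⁻¹ • u) := by
        rw [hp_def, hq_def]
        match_scalars <;> (field_simp; try ring)
      have h0 : p + q = 0 := by
        rw [hsum, hab, hβu, show z - w + (w - z) = 0 by abel, smul_zero]
      exact eq_neg_of_add_eq_zero_right h0
    obtain ⟨m, hm, hxe⟩ := hJA (u + r • p)
    have huJA : u = JA (u + r • p) := res_unique hmA hr hp hm hxe
    have h2x : (2:ℝ) • JA (u + r • p) - (u + r • p) = u + r • q := by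
      rw [← huJA, hpq]; module
    obtain ⟨n, hn, hye⟩ := hJB (u + r • q)
    have huJB : u = JB (u + r • q) := res_unique hmB hr hq hn hye
    refine ⟨u + r • p, ?_, ?_⟩
    · rw [h2x, ← huJB, hpq]; module
    · rw [← huJA]; exact huw
  · rintro ⟨x, hx, rfl⟩
    set u := JA x with hu
    obtain ⟨m, hm, hxe⟩ := hJA x
    rw [← hu] at hm hxe
    obtain ⟨n, hn, hye⟩ := hJB ((2:ℝ) • u - x)
    have hJBy : JB ((2:ℝ) • u - x) = u := by
      have h2 : (2:ℝ) • JB ((2:ℝ) • u - x) = (2:ℝ) • u := by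
        calc (2:ℝ) • JB ((2:ℝ) • u - x)
            = ((2:ℝ) • JB ((2:ℝ) • u - x) - ((2:ℝ) • u - x)) + ((2:ℝ) • u - x) := by abel
          _ = x + ((2:ℝ) • u - x) := by rw [hx]
          _ = (2:ℝ) • u := by abel
      exact smul_right_injective H two_ne_zero h2
    rw [hJBy] at hn hye
    have hnm : n = -m := by
      have h3 : u + r • n = u + r • (-m) := by
        rw [← hye, hxe]; module
      have h4 : r • n = r • (-m) := by
        have := add_left_cancel h3
        exact this
      exact smul_right_injective H hr.ne' h4
    obtain ⟨a, ha, hma⟩ := hm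
    obtain ⟨b, hb, hnb⟩ := hn
    simp only at hma hnb
    refine ⟨a, ha, b, hb, ?_⟩
    have hsum : (2 * (1 - β)) • (a + b + β⁻¹ • u) = 0 := by
      have heq : (2 * (1 - β)) • (a + b + β⁻¹ • u)
          = ((2 * (1 - β)) • a + ((1 - β) / β) • u)
            + ((2 * (1 - β)) • b + ((1 - β) / β) • u) := by
        match_scalars <;> (field_simp; try ring)
      rw [heq, hma, hnb, hnm]
      abel
    have habu : a + b + β⁻¹ • u = 0 := by
      rcases smul_eq_zero.mp hsum with h | h
      · exact absurd h hcne
      · exact h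
    have hre : β⁻¹ • u + z + a + b = (a + b + β⁻¹ • u) + z := by abel
    rw [hre, habu, zero_add]
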